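/- Let Σ be a finite nonempty alphabet, P a stochastic language over Σ, let u_0, u_1, …, u_n ∈ Σ* be words with P(u_iΣ*) > 0 for each i, and let α_1, …, α_n ∈ ℝ be such that u_0^{-1}P = Σ_{i=1}^n α_i·u_i^{-1}P. Then for μ-almost every ω ∈ Ω there exists K ∈ ℕ such that for every k ≥ K: P_{ω,k}(u_iΣ*) > 0 for each i ∈ {0,…,n}, and the system I({u_1,…,u_n}, u_0, ω, k, k^{-1/3}) has a solution. -/

import Mathlib

open scoped BigOperators
open MeasureTheory

/-- A stochastic language over the alphabet `A`: a nonnegative real-valued function on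
words whose values are summable with sum `1`. -/
def IsStochastic {A : Type*} (p : List A → ℝ) : Prop :=
  (∀ w, 0 ≤ p w) ∧ HasSum p 1

/-- `pre w` is the set `wΣ*` of words having `w` as a prefix. -/
def pre {A : Type*} (w : List A) : Set (List A) := {v | w <+: v}

/-- The residualLang language `u⁻¹P` of `P` with respect to the word `u`. -/
noncomputable def residualLang {A : Type*} (P : List A → ℝ) (u w : List A) : ℝ :=
  P (u ++ w) / ∑' v : pre u, P (v : List A)

/-- The empirical probability of the set `X` among the first `m` samples of `ω`. -/
noncomputable def emp {A : Type*} (ω : ℕ → List A) (m : ℕ) (X : Set (List A)) : ℝ :=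
  (∑ i ∈ Finset.range m, X.indicator (fun _ => (1 : ℝ)) (ω i)) / m

/-- `x` is a solution of the system `I({u 0, …, u (n-1)}, v, ω, m, ε)`. -/
def IsSolution {A : Type*} {n : ℕ} (u : Fin n → List A) (v : List A)
    (ω : ℕ → List A) (m : ℕ) (ε : ℝ) (x : Fin n → ℝ) : Prop :=
  (∑ i, x i = 1) ∧
    ∀ w : List A, (∃ i < m, w <:+: ω i) →
      |emp ω m (pre (v ++ w)) / emp ω m (pre v) -
          ∑ i, x i * (emp ω m (pre (u i ++ w)) / emp ω m (pre (u i)))| ≤ ε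

/-- Words over a countable alphabet carry the discrete (full) σ-algebra. -/
instance listMeasurableSpace {A : Type*} : MeasurableSpace (List A) := ⊤

/-- `μ` is the infinite i.i.d. product of the law on `List A` given by `P`:
its finite-dimensional cylinder probabilities are the corresponding products. -/
def IsIIDProduct {A : Type*} (P : List A → ℝ) (μ : Measure (ℕ → List A)) : Prop :=
  ∀ (s : Finset ℕ) (E : ℕ → Set (List A)),
    μ {ω | ∀ i ∈ s, ω i ∈ E i} = ∏ i ∈ s, ∑' w : E i, ENNReal.ofReal (P (w : List A))

set_option linter.unusedSectionVars false
set_option maxHeartbeats 1000000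

noncomputable def qm {W : Type*} (P : W → ℝ) (X : Set W) : ℝ := ∑' w, X.indicator P w

section qmlem
variable {W : Type*} {P : W → ℝ} (h0 : ∀ w, 0 ≤ P w) (h1 : HasSum P 1)
include h0 h1

lemma qm_summable (X : Set W) : Summable (X.indicator P) :=
  h1.summable.indicator X

lemma qm_nonneg (X : Set W) : 0 ≤ qm P X :=
  tsum_nonneg fun w => Set.indicator_nonneg (fun x _ => h0 x) w

lemma qm_mono {X Y : Set W} (h : X ⊆ Y) : qm P X ≤ qm P Y :=
  Summable.tsum_le_tsum (fun w => Set.indicator_le_indicator_of_subset h (fun x => h0 x) w)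
    (qm_summable h0 h1 X) (qm_summable h0 h1 Y)

lemma qm_add_compl (X : Set W) : qm P X + qm P Xᶜ = 1 := by
  rw [qm, qm, ← Summable.tsum_add (qm_summable h0 h1 X) (qm_summable h0 h1 Xᶜ)]
  have : ∀ w, X.indicator P w + Xᶜ.indicator P w = P w := by
    intro w
    by_cases hw : w ∈ X
    · rw [Set.indicator_of_mem hw, Set.indicator_of_notMem (by simpa using hw)]; ring
    · rw [Set.indicator_of_notMem hw, Set.indicator_of_mem (by simpa using hw)]; ring
  simp_rw [this]
  exact h1.tsum_eq

lemma qm_le_one (X : Set W) : qm P X ≤ 1 := by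
  have := qm_add_compl h0 h1 X
  have h2 := qm_nonneg h0 h1 Xᶜ
  linarith

lemma qm_univ : qm P Set.univ = (1 : ℝ) := by
  have := qm_add_compl h0 h1 Set.univ
  have : qm P (Set.univ : Set W)ᶜ = 0 := by
    simp [qm]
  have h2 := qm_add_compl h0 h1 Set.univ
  rw [this] at h2; linarith

lemma qm_diff {X Y : Set W} (h : Y ⊆ X) : qm P (X \ Y) = qm P X - qm P Y := by
  have : ∀ w, X.indicator P w = (X \ Y).indicator P w + Y.indicator P w := by
    intro w
    by_cases hw : w ∈ Y
    · simp [Set.indicator_of_mem hw, Set.indicator_of_mem (h hw),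
        Set.indicator_of_notMem (by simp [hw] : w ∉ X \ Y)]
    · by_cases hx : w ∈ X
      · simp [Set.indicator_of_mem hx, Set.indicator_of_notMem hw,
          Set.indicator_of_mem (by simp [hx, hw] : w ∈ X \ Y)]
      · simp [Set.indicator_of_notMem hx, Set.indicator_of_notMem hw,
          Set.indicator_of_notMem (by simp [hx] : w ∉ X \ Y)]
  have hq : qm P X = qm P (X \ Y) + qm P Y := by
    rw [qm, qm, qm, ← Summable.tsum_add (qm_summable h0 h1 _) (qm_summable h0 h1 Y)]
    exact tsum_congr this
  linarith

lemma qm_finset_le {X : Set W} (F : Finset W) (hF : ∀ w ∈ F, w ∈ X) :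
    ∑ w ∈ F, P w ≤ qm P X := by
  have : ∑ w ∈ F, P w = ∑ w ∈ F, X.indicator P w :=
    Finset.sum_congr rfl fun w hw => (Set.indicator_of_mem (hF w hw) P).symm
  rw [this]
  exact Summable.sum_le_tsum F (fun w _ => Set.indicator_nonneg (fun x _ => h0 x) w)
    (qm_summable h0 h1 X)

lemma qm_le_of_forall_finset {X : Set W} {c : ℝ}
    (h : ∀ F : Finset W, (∀ w ∈ F, w ∈ X) → ∑ w ∈ F, P w ≤ c) : qm P X ≤ c := by
  classical
  refine Summable.tsum_le_of_sum_le (qm_summable h0 h1 X) ?_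
  intro F
  have : ∑ w ∈ F, X.indicator P w = ∑ w ∈ F.filter (fun w => w ∈ X), P w := by
    rw [Finset.sum_filter]
    refine Finset.sum_congr rfl fun w _ => ?_
    by_cases hw : w ∈ X <;> simp [Set.indicator, hw]
  rw [this]
  exact h _ (by intro w hw; simpa using (Finset.mem_filter.mp hw).2)

end qmlem

section listorder
variable {A : Type*} [LinearOrder A]

lemma lex_append (v : List A) (c : A) (z : List A) : v < v ++ (c :: z) := by
  show List.Lex (· < ·) v (v ++ (c :: z))
  induction v with
  | nil => exact List.Lex.nil
  | cons a v ih => exact List.Lex.cons ih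

lemma prefix_le {v x : List A} (h : v <+: x) : v ≤ x := by
  obtain ⟨z, rfl⟩ := h
  cases z with
  | nil => simp
  | cons c z => exact le_of_lt (lex_append v c z)

lemma lex_of_lt {x y : List A} (h : x < y) : List.Lex (· < ·) x y := h

lemma prefix_of_between : ∀ (v x y : List A), v ≤ x → x ≤ y → v <+: y → v <+: x := by
  intro v
  induction v with
  | nil => intro x y _ _ _; exact List.nil_prefix
  | cons a v ih =>
    intro x y h1 h2 hy
    obtain ⟨z, hz⟩ := hy
    cases x with
    | nil =>
      exfalso
      rcases lt_or_eq_of_le h1 with h | h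
      · exact List.not_lex_nil (lex_of_lt h)
      · exact List.cons_ne_nil a v h
    | cons b x =>
      -- y = a :: (v ++ z)
      have hy' : y = a :: (v ++ z) := by rw [← hz]; rfl
      subst hy'
      -- analyze h1 : a :: v ≤ b :: x
      have hab : a = b ∧ v ≤ x := by
        rcases lt_or_eq_of_le h1 with h | h
        · cases lex_of_lt h with
          | cons h => exact ⟨rfl, le_of_lt h⟩
          | rel h =>
            -- a < b; but from h2 : b :: x ≤ a :: (v ++ z), need b ≤ a
            exfalso
            rcases lt_or_eq_of_le h2 with h' | h'
            · cases lex_of_lt h' with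
              | cons h' => exact absurd h (lt_irrefl _)
              | rel h' => exact absurd (h.trans h') (lt_irrefl _)
            · rw [List.cons.injEq] at h'
              exact absurd h (by rw [h'.1]; exact lt_irrefl _)
        · rw [List.cons.injEq] at h
          exact ⟨h.1, le_of_eq h.2⟩
      obtain ⟨rfl, hvx⟩ := hab
      have hxy : x ≤ v ++ z := by
        rcases lt_or_eq_of_le h2 with h' | h'
        · cases lex_of_lt h' with
          | cons h' => exact le_of_lt h'
          | rel h' => exact absurd h' (lt_irrefl _)
        · rw [List.cons.injEq] at h'
          exact le_of_eq h'.2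
      have := ih x (v ++ z) hvx hxy ⟨z, rfl⟩
      obtain ⟨t, ht⟩ := this; exact ⟨t, by rw [List.cons_append, ht]⟩

end listorder

section chain
variable {W : Type*} [LinearOrder W]

def Sset (P : W → ℝ) (t : ℝ) (j : ℕ) : Set W := {x | (j : ℝ) * t ≤ qm P (Set.Ici x)}
def Tset (P : W → ℝ) (t : ℝ) (j : ℕ) : Set W := ⋂ x ∈ Sset P t j, Set.Ici x
def Sset' (P : W → ℝ) (t : ℝ) (j : ℕ) : Set W := {x | (j : ℝ) * t ≤ qm P (Set.Iic x)}
def Tset' (P : W → ℝ) (t : ℝ) (j : ℕ) : Set W := ⋂ x ∈ Sset' P t j, Set.Iic x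

variable {P : W → ℝ} (h0 : ∀ w, 0 ≤ P w) (h1 : HasSum P 1)
include h0 h1

lemma exists_mem_ray_ge {U : Set W} {c : ℝ} (hc0 : 0 ≤ c) (hc : c < qm P U) :
    ∃ x ∈ U, c ≤ qm P (Set.Ici x) := by
  by_contra hcon
  push_neg at hcon
  have : qm P U ≤ c := by
    refine qm_le_of_forall_finset h0 h1 ?_
    intro F hF
    rcases F.eq_empty_or_nonempty with rfl | hne
    · simpa using hc0
    · have hx0 : F.min' hne ∈ U := hF _ (F.min'_mem hne)
      have : ∑ w ∈ F, P w ≤ qm P (Set.Ici (F.min' hne)) := by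
        refine qm_finset_le h0 h1 F ?_
        intro w hw
        exact F.min'_le w hw
      exact this.trans (le_of_lt (hcon _ hx0))
  linarith

lemma qm_Tset_ge {t : ℝ} {j : ℕ} (hne : (Sset P t j).Nonempty) :
    (j : ℝ) * t ≤ qm P (Tset P t j) := by
  classical
  obtain ⟨x₀, hx₀⟩ := hne
  have hjt1 : (j : ℝ) * t ≤ 1 := hx₀.trans (qm_le_one h0 h1 _)
  have hcompl : qm P (Tset P t j)ᶜ ≤ 1 - (j : ℝ) * t := by
    refine qm_le_of_forall_finset h0 h1 ?_
    intro F hF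
    rcases F.eq_empty_or_nonempty with rfl | hne'
    · simpa using hjt1
    · have hch : ∀ w ∈ F, ∃ x, x ∈ Sset P t j ∧ ¬ x ≤ w := by
        intro w hw
        have := hF w hw
        simp only [Tset, Set.mem_compl_iff, Set.mem_iInter, not_forall] at this
        obtain ⟨x, hx, hxw⟩ := this
        exact ⟨x, hx, by simpa [Set.mem_Ici] using hxw⟩
      choose f hfS hfw using hch
      set G : Finset W := F.attach.image (fun w => f w.1 w.2) with hG
      have hGne : G.Nonempty := (Finset.attach_nonempty_iff.mpr hne').image _
      set xs := G.max' hGne with hxs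
      have hxsS : xs ∈ Sset P t j := by
        have : xs ∈ G := G.max'_mem hGne
        simp only [hG, Finset.mem_image] at this
        obtain ⟨w, _, hw⟩ := this
        rw [← hw]; exact hfS _ _
      have hsub : ∀ w ∈ F, w ∈ (Set.Ici xs)ᶜ := by
        intro w hw
        have h1' : f w hw ≤ xs := by
          apply G.le_max'
          simp only [hG, Finset.mem_image]
          exact ⟨⟨w, hw⟩, F.mem_attach _, rfl⟩
        have h2' := hfw w hw
        simp only [Set.mem_compl_iff, Set.mem_Ici]
        intro hxsw
        exact h2' (h1'.trans hxsw)
      have := qm_finset_le h0 h1 F hsub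
      have hc := qm_add_compl h0 h1 (Set.Ici xs)
      have : ∑ w ∈ F, P w ≤ qm P (Set.Ici xs)ᶜ := this
      have hxs' : (j : ℝ) * t ≤ qm P (Set.Ici xs) := hxsS
      linarith
  have := qm_add_compl h0 h1 (Tset P t j)
  linarith

lemma sandwich_lower (E : Set W → ℝ) (hE0 : ∀ X, 0 ≤ E X)
    (hEmono : ∀ X Y : Set W, X ⊆ Y → E X ≤ E Y) {t : ℝ} (ht : 0 < t)
    (hctrl : ∀ j : ℕ, 1 ≤ j → (j : ℝ) * t ≤ 1 → (Sset P t j).Nonempty →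
      qm P (Tset P t j) - t ≤ E (Tset P t j))
    {U : Set W} (hU : IsUpperSet U) : qm P U - 3 * t ≤ E U := by
  set s := qm P U with hs
  by_cases hcase : s ≤ 3 * t
  · have := hE0 U; linarith
  push_neg at hcase
  set j : ℕ := ⌈(s - 2 * t) / t⌉₊ with hj
  have hj1 : 1 ≤ j := by
    rw [hj]
    rw [Nat.one_le_ceil_iff]
    exact div_pos (by linarith) ht
  have hjle : (j : ℝ) * t ≤ s - t := by
    have h' : ((j : ℝ)) < (s - 2*t)/t + 1 :=
      Nat.ceil_lt_add_one (le_of_lt (div_pos (by linarith) ht))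
    have := (mul_lt_mul_of_pos_right h' ht)
    rw [add_mul, div_mul_cancel₀ _ (ne_of_gt ht)] at this
    nlinarith
  have hjge : s - 2 * t ≤ (j : ℝ) * t := by
    have h' : (s - 2*t)/t ≤ (j : ℝ) := Nat.le_ceil _
    calc s - 2*t = ((s - 2*t)/t) * t := by field_simp
    _ ≤ (j : ℝ) * t := by nlinarith
  obtain ⟨x, hxU, hxray⟩ := exists_mem_ray_ge h0 h1 (c := (j : ℝ)*t)
    (by positivity) (by linarith)
  have hxS : x ∈ Sset P t j := hxray
  have hTsub : Tset P t j ⊆ U := by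
    refine subset_trans ?_ (fun y (hy : y ∈ Set.Ici x) => hU hy hxU)
    exact Set.biInter_subset_of_mem hxS
  have hTq := qm_Tset_ge h0 h1 (t := t) (j := j) ⟨x, hxS⟩
  have hs1 : s ≤ 1 := qm_le_one h0 h1 U
  have := hctrl j hj1 (by linarith) ⟨x, hxS⟩
  have := hEmono _ _ hTsub
  linarith


lemma exists_mem_iic_ge {U : Set W} {c : ℝ} (hc0 : 0 ≤ c) (hc : c < qm P U) :
    ∃ x ∈ U, c ≤ qm P (Set.Iic x) := by
  by_contra hcon
  push_neg at hcon
  have : qm P U ≤ c := by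
    refine qm_le_of_forall_finset h0 h1 ?_
    intro F hF
    rcases F.eq_empty_or_nonempty with rfl | hne
    · simpa using hc0
    · have hx0 : F.max' hne ∈ U := hF _ (F.max'_mem hne)
      have : ∑ w ∈ F, P w ≤ qm P (Set.Iic (F.max' hne)) := by
        refine qm_finset_le h0 h1 F ?_
        intro w hw
        exact F.le_max' w hw
      exact this.trans (le_of_lt (hcon _ hx0))
  linarith

lemma qm_Tset'_ge {t : ℝ} {j : ℕ} (hne : (Sset' P t j).Nonempty) :
    (j : ℝ) * t ≤ qm P (Tset' P t j) := by
  classical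
  obtain ⟨x₀, hx₀⟩ := hne
  have hjt1 : (j : ℝ) * t ≤ 1 := hx₀.trans (qm_le_one h0 h1 _)
  have hcompl : qm P (Tset' P t j)ᶜ ≤ 1 - (j : ℝ) * t := by
    refine qm_le_of_forall_finset h0 h1 ?_
    intro F hF
    rcases F.eq_empty_or_nonempty with rfl | hne'
    · simpa using hjt1
    · have hch : ∀ w ∈ F, ∃ x, x ∈ Sset' P t j ∧ ¬ w ≤ x := by
        intro w hw
        have := hF w hw
        simp only [Tset', Set.mem_compl_iff, Set.mem_iInter, not_forall] at this
        obtain ⟨x, hx, hxw⟩ := this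
        exact ⟨x, hx, by simpa [Set.mem_Iic] using hxw⟩
      choose f hfS hfw using hch
      set G : Finset W := F.attach.image (fun w => f w.1 w.2) with hG
      have hGne : G.Nonempty := (Finset.attach_nonempty_iff.mpr hne').image _
      set xs := G.min' hGne with hxs
      have hxsS : xs ∈ Sset' P t j := by
        have : xs ∈ G := G.min'_mem hGne
        simp only [hG, Finset.mem_image] at this
        obtain ⟨w, _, hw⟩ := this
        rw [← hw]; exact hfS _ _
      have hsub : ∀ w ∈ F, w ∈ (Set.Iic xs)ᶜ := by
        intro w hw
        have h1' : xs ≤ f w hw := by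
          apply G.min'_le
          simp only [hG, Finset.mem_image]
          exact ⟨⟨w, hw⟩, F.mem_attach _, rfl⟩
        have h2' := hfw w hw
        simp only [Set.mem_compl_iff, Set.mem_Iic]
        intro hxsw
        exact h2' (hxsw.trans h1')
      have hle := qm_finset_le h0 h1 F hsub
      have hc := qm_add_compl h0 h1 (Set.Iic xs)
      have hxs' : (j : ℝ) * t ≤ qm P (Set.Iic xs) := hxsS
      linarith
  have := qm_add_compl h0 h1 (Tset' P t j)
  linarith

lemma sandwich_lower_low (E : Set W → ℝ) (hE0 : ∀ X, 0 ≤ E X)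
    (hEmono : ∀ X Y : Set W, X ⊆ Y → E X ≤ E Y) {t : ℝ} (ht : 0 < t)
    (hctrl : ∀ j : ℕ, 1 ≤ j → (j : ℝ) * t ≤ 1 → (Sset' P t j).Nonempty →
      qm P (Tset' P t j) - t ≤ E (Tset' P t j))
    {U : Set W} (hU : IsLowerSet U) : qm P U - 3 * t ≤ E U := by
  set s := qm P U with hs
  by_cases hcase : s ≤ 3 * t
  · have := hE0 U; linarith
  push_neg at hcase
  set j : ℕ := ⌈(s - 2 * t) / t⌉₊ with hj
  have hj1 : 1 ≤ j := by
    rw [hj, Nat.one_le_ceil_iff]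
    exact div_pos (by linarith) ht
  have hjle : (j : ℝ) * t ≤ s - t := by
    have h' : ((j : ℝ)) < (s - 2*t)/t + 1 :=
      Nat.ceil_lt_add_one (le_of_lt (div_pos (by linarith) ht))
    have := (mul_lt_mul_of_pos_right h' ht)
    rw [add_mul, div_mul_cancel₀ _ (ne_of_gt ht)] at this
    nlinarith
  have hjge : s - 2 * t ≤ (j : ℝ) * t := by
    have h' : (s - 2*t)/t ≤ (j : ℝ) := Nat.le_ceil _
    calc s - 2*t = ((s - 2*t)/t) * t := by field_simp
    _ ≤ (j : ℝ) * t := by nlinarith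
  obtain ⟨x, hxU, hxray⟩ := exists_mem_iic_ge h0 h1 (c := (j : ℝ)*t)
    (by positivity) (by linarith)
  have hxS : x ∈ Sset' P t j := hxray
  have hTsub : Tset' P t j ⊆ U := by
    refine subset_trans ?_ (fun y (hy : y ∈ Set.Iic x) => hU hy hxU)
    exact Set.biInter_subset_of_mem hxS
  have hTq := qm_Tset'_ge h0 h1 (t := t) (j := j) ⟨x, hxS⟩
  have hs1 : s ≤ 1 := qm_le_one h0 h1 U
  have := hctrl j hj1 (by linarith) ⟨x, hxS⟩
  have := hEmono _ _ hTsub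
  linarith

/-- two-sided uniform bound over upper sets. -/
lemma uniform_upper (E : Set W → ℝ) (hE0 : ∀ X, 0 ≤ E X) (hE1 : ∀ X, E X ≤ 1)
    (hEmono : ∀ X Y : Set W, X ⊆ Y → E X ≤ E Y) {t : ℝ} (ht : 0 < t)
    (hctrlL : ∀ j : ℕ, 1 ≤ j → (j : ℝ) * t ≤ 1 → (Sset P t j).Nonempty →
      |E (Tset P t j) - qm P (Tset P t j)| ≤ t)
    (hctrlU : ∀ j : ℕ, 1 ≤ j → (j : ℝ) * t ≤ 1 → (Sset' P t j).Nonempty →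
      |E ((Tset' P t j)ᶜ) - qm P ((Tset' P t j)ᶜ)| ≤ t)
    {U : Set W} (hU : IsUpperSet U) : |E U - qm P U| ≤ 3 * t := by
  have hlow : qm P U - 3 * t ≤ E U := by
    refine sandwich_lower h0 h1 E hE0 hEmono ht ?_ hU
    intro j hj hj1t hne
    have := hctrlL j hj hj1t hne
    have := abs_le.mp this
    linarith [this.1]
  have hup : E U ≤ qm P U + 3 * t := by
    have hlow' := sandwich_lower_low h0 h1 (fun X => 1 - E Xᶜ)
      (fun X => by have := hE1 Xᶜ; linarith)
      (fun X Y hXY => by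
        have := hEmono _ _ (Set.compl_subset_compl.mpr hXY); linarith)
      ht (fun j hj hj1t hne => by
        have h' := abs_le.mp (hctrlU j hj hj1t hne)
        have hq := qm_add_compl h0 h1 (Tset' P t j)
        have heq : qm P (Tset' P t j)ᶜ = 1 - qm P (Tset' P t j) := by linarith
        rw [heq] at h'
        linarith [h'.2])
      hU.compl
    simp only [compl_compl] at hlow'
    have hq := qm_add_compl h0 h1 U
    linarith
  rw [abs_le]; constructor <;> linarith

end chain


section preuniform
variable {A : Type*} [LinearOrder A] {P : List A → ℝ}
  (h0 : ∀ w, 0 ≤ P w) (h1 : HasSum P 1)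
include h0 h1

lemma pre_subset_Ici (v : List A) : pre v ⊆ Set.Ici v := fun _ hx => prefix_le hx

lemma isUpperSet_Ici_diff_pre (v : List A) : IsUpperSet (Set.Ici v \ pre v) := by
  intro a b hab ha
  obtain ⟨hav, hap⟩ := ha
  refine ⟨le_trans hav hab, ?_⟩
  intro hbp
  exact hap (prefix_of_between v a b hav hab hbp)

/-- Uniform two-sided bound on all prefix sets from breakpoint control. -/
lemma uniform_pre (E : Set (List A) → ℝ) (hE0 : ∀ X, 0 ≤ E X) (hE1 : ∀ X, E X ≤ 1)
    (hEmono : ∀ X Y : Set (List A), X ⊆ Y → E X ≤ E Y)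
    (hEdiff : ∀ X Y : Set (List A), Y ⊆ X → E (X \ Y) = E X - E Y)
    {t : ℝ} (ht : 0 < t)
    (hctrlL : ∀ j : ℕ, 1 ≤ j → (j : ℝ) * t ≤ 1 → (Sset P t j).Nonempty →
      |E (Tset P t j) - qm P (Tset P t j)| ≤ t)
    (hctrlU : ∀ j : ℕ, 1 ≤ j → (j : ℝ) * t ≤ 1 → (Sset' P t j).Nonempty →
      |E ((Tset' P t j)ᶜ) - qm P ((Tset' P t j)ᶜ)| ≤ t)
    (v : List A) : |E (pre v) - qm P (pre v)| ≤ 6 * t := by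
  have hU1 : IsUpperSet (Set.Ici v) := isUpperSet_Ici v
  have hU2 : IsUpperSet (Set.Ici v \ pre v) := isUpperSet_Ici_diff_pre h0 h1 v
  have hsub : pre v ⊆ Set.Ici v := pre_subset_Ici h0 h1 v
  have hd : Set.Ici v \ (Set.Ici v \ pre v) = pre v := Set.diff_diff_cancel_left hsub
  have hb1 := uniform_upper h0 h1 E hE0 hE1 hEmono ht hctrlL hctrlU hU1
  have hb2 := uniform_upper h0 h1 E hE0 hE1 hEmono ht hctrlL hctrlU hU2
  have hE : E (pre v) = E (Set.Ici v) - E (Set.Ici v \ pre v) := by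
    have h' := hEdiff (Set.Ici v) (Set.Ici v \ pre v) Set.diff_subset
    rw [hd] at h'; exact h'
  have hq : qm P (pre v) = qm P (Set.Ici v) - qm P (Set.Ici v \ pre v) := by
    have h' := qm_diff h0 h1 (X := Set.Ici v) (Y := Set.Ici v \ pre v) Set.diff_subset
    rw [hd] at h'; exact h'
  rw [hE, hq]
  have := abs_le.mp hb1
  have := abs_le.mp hb2
  rw [abs_le]
  constructor <;> [skip; skip] <;> cases' abs_le.mp hb1 with a1 a2 <;>
    cases' abs_le.mp hb2 with b1 b2 <;> linarith

end preuniform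

lemma exp_le_one_add_add_sq {l : ℝ} (h0 : 0 ≤ l) (h1 : l ≤ 1) :
    Real.exp l ≤ 1 + l + l ^ 2 := by
  have hb := Real.exp_bound (x := l) (by rw [abs_of_nonneg h0]; exact h1)
    (n := 2) (by norm_num)
  have : ∑ m ∈ Finset.range 2, l ^ m / (m.factorial : ℝ) = 1 + l := by
    simp [Finset.sum_range_succ, Nat.factorial]
  rw [this, abs_of_nonneg h0] at hb
  norm_num [Nat.factorial] at hb
  have := abs_le.mp hb
  nlinarith [this.2, sq_nonneg l]

lemma binom_tail (k : ℕ) (q t : ℝ) (hq0 : 0 ≤ q) (hq1 : q ≤ 1) (ht : 0 < t) (ht1 : t ≤ 1) :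
    ∑ F ∈ (Finset.range k).powerset.filter
        (fun F => (k : ℝ) * (q + t) ≤ (F.card : ℝ)),
      q ^ F.card * (1 - q) ^ (k - F.card)
    ≤ Real.exp (-((k : ℝ) * t ^ 2) / 4) := by
  classical
  set l : ℝ := t / 2 with hl
  have hl0 : 0 ≤ l := by positivity
  have hl1 : l ≤ 1 := by rw [hl]; linarith
  have hterm : ∀ F ∈ (Finset.range k).powerset.filter
      (fun F => (k : ℝ) * (q + t) ≤ (F.card : ℝ)),
      q ^ F.card * (1 - q) ^ (k - F.card)
        ≤ (q * Real.exp l) ^ F.card * (1 - q) ^ (k - F.card)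
          * Real.exp (-(l * ((k : ℝ) * (q + t)))) := by
    intro F hF
    have hFc := (Finset.mem_filter.mp hF).2
    have h1' : (1 : ℝ) ≤ Real.exp (l * (F.card : ℝ)) * Real.exp (-(l * ((k : ℝ) * (q + t)))) := by
      rw [← Real.exp_add]
      refine Real.one_le_exp ?_
      nlinarith
    have hmul : (q * Real.exp l) ^ F.card = q ^ F.card * Real.exp (l * (F.card : ℝ)) := by
      rw [mul_pow, ← Real.exp_nat_mul]
      ring_nf
    rw [hmul]
    have h1q : (0:ℝ) ≤ 1 - q := by linarith
    have hnn : 0 ≤ q ^ F.card * (1 - q) ^ (k - F.card) :=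
      mul_nonneg (pow_nonneg hq0 _) (pow_nonneg h1q _)
    calc q ^ F.card * (1 - q) ^ (k - F.card)
        = q ^ F.card * (1 - q) ^ (k - F.card) * 1 := by ring
      _ ≤ q ^ F.card * (1 - q) ^ (k - F.card) *
          (Real.exp (l * (F.card : ℝ)) * Real.exp (-(l * ((k : ℝ) * (q + t))))) := by
          exact mul_le_mul_of_nonneg_left h1' hnn
      _ = q ^ F.card * Real.exp (l * (F.card : ℝ)) * (1 - q) ^ (k - F.card)
          * Real.exp (-(l * ((k : ℝ) * (q + t)))) := by ring
  have hsum1 : ∑ F ∈ (Finset.range k).powerset.filter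
      (fun F => (k : ℝ) * (q + t) ≤ (F.card : ℝ)),
      q ^ F.card * (1 - q) ^ (k - F.card)
      ≤ ∑ F ∈ (Finset.range k).powerset,
        (q * Real.exp l) ^ F.card * (1 - q) ^ (k - F.card)
          * Real.exp (-(l * ((k : ℝ) * (q + t)))) := by
    refine le_trans (Finset.sum_le_sum hterm) ?_
    refine Finset.sum_le_sum_of_subset_of_nonneg (Finset.filter_subset _ _) ?_
    intro F hF _
    have h1q : (0:ℝ) ≤ 1 - q := by linarith
    exact mul_nonneg (mul_nonneg (pow_nonneg (mul_nonneg hq0 (Real.exp_nonneg l)) _)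
      (pow_nonneg h1q _)) (Real.exp_nonneg _)
  have hbinom : ∑ F ∈ (Finset.range k).powerset,
      (q * Real.exp l) ^ F.card * (1 - q) ^ (k - F.card)
      = (q * Real.exp l + (1 - q)) ^ k := by
    have := Finset.prod_add (fun _ : ℕ => q * Real.exp l) (fun _ : ℕ => 1 - q)
      (Finset.range k)
    simp only [Finset.prod_const, Finset.card_range] at this
    rw [this]
    refine Finset.sum_congr rfl ?_
    intro F hF
    have hsub : F ⊆ Finset.range k := Finset.mem_powerset.mp hF
    rw [Finset.card_sdiff_of_subset hsub, Finset.card_range]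
  have hbase : q * Real.exp l + (1 - q) ≤ Real.exp (q * l + l ^ 2) := by
    have he := exp_le_one_add_add_sq hl0 hl1
    have h2 : q * Real.exp l + (1 - q) ≤ 1 + q * l + q * l ^ 2 := by nlinarith
    have h3 : 1 + q * l + q * l ^ 2 ≤ 1 + (q * l + l ^ 2) := by nlinarith
    refine (h2.trans h3).trans ?_
    linarith [Real.add_one_le_exp (q * l + l ^ 2)]
  have h1q : (0:ℝ) ≤ 1 - q := by linarith
  have hbpos : (0:ℝ) ≤ q * Real.exp l + (1 - q) :=
    add_nonneg (mul_nonneg hq0 (Real.exp_nonneg _)) h1q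
  have hpow : (q * Real.exp l + (1 - q)) ^ k ≤ Real.exp ((k : ℝ) * (q * l + l ^ 2)) := by
    calc (q * Real.exp l + (1 - q)) ^ k ≤ (Real.exp (q * l + l ^ 2)) ^ k :=
          pow_le_pow_left₀ hbpos hbase k
      _ = Real.exp ((k : ℝ) * (q * l + l ^ 2)) := by
          rw [← Real.exp_nat_mul]
  have hfinal : Real.exp (-(l * ((k : ℝ) * (q + t)))) * Real.exp ((k : ℝ) * (q * l + l ^ 2))
      = Real.exp (-((k : ℝ) * t ^ 2) / 4) := by
    rw [← Real.exp_add]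
    congr 1
    have : l = t / 2 := hl
    rw [this]; ring
  calc ∑ F ∈ (Finset.range k).powerset.filter
        (fun F => (k : ℝ) * (q + t) ≤ (F.card : ℝ)),
      q ^ F.card * (1 - q) ^ (k - F.card)
      ≤ ∑ F ∈ (Finset.range k).powerset,
        (q * Real.exp l) ^ F.card * (1 - q) ^ (k - F.card)
          * Real.exp (-(l * ((k : ℝ) * (q + t)))) := hsum1
    _ = (∑ F ∈ (Finset.range k).powerset,
        (q * Real.exp l) ^ F.card * (1 - q) ^ (k - F.card))
          * Real.exp (-(l * ((k : ℝ) * (q + t)))) := by rw [← Finset.sum_mul]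
    _ = (q * Real.exp l + (1 - q)) ^ k * Real.exp (-(l * ((k : ℝ) * (q + t)))) := by
          rw [hbinom]
    _ ≤ Real.exp ((k : ℝ) * (q * l + l ^ 2)) * Real.exp (-(l * ((k : ℝ) * (q + t)))) := by
          exact mul_le_mul_of_nonneg_right hpow (Real.exp_nonneg _)
    _ = Real.exp (-((k : ℝ) * t ^ 2) / 4) := by rw [mul_comm]; exact hfinal

section emplem
variable {A : Type*}

lemma emp_eq_card (ω : ℕ → List A) (m : ℕ) (X : Set (List A)) [DecidablePred (· ∈ X)] :
    emp ω m X = (((Finset.range m).filter (fun i => ω i ∈ X)).card : ℝ) / m := by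
  unfold emp
  congr 1
  rw [← Finset.sum_boole]
  refine Finset.sum_congr rfl fun i _ => ?_
  by_cases h : ω i ∈ X <;> simp [Set.indicator, h]

lemma emp_nonneg (ω : ℕ → List A) (m : ℕ) (X : Set (List A)) : 0 ≤ emp ω m X := by
  unfold emp
  apply div_nonneg _ (Nat.cast_nonneg m)
  exact Finset.sum_nonneg fun i _ => Set.indicator_nonneg (by intro _ _; norm_num) _

lemma emp_sum_mono (ω : ℕ → List A) (m : ℕ) {X Y : Set (List A)} (h : X ⊆ Y) :
    ∑ i ∈ Finset.range m, X.indicator (fun _ => (1:ℝ)) (ω i)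
      ≤ ∑ i ∈ Finset.range m, Y.indicator (fun _ => (1:ℝ)) (ω i) := by
  refine Finset.sum_le_sum fun i _ => ?_
  exact Set.indicator_le_indicator_of_subset h (fun _ => by norm_num) _

lemma emp_mono (ω : ℕ → List A) (m : ℕ) {X Y : Set (List A)} (h : X ⊆ Y) :
    emp ω m X ≤ emp ω m Y := by
  unfold emp
  rcases Nat.eq_zero_or_pos m with rfl | hm
  · simp
  · exact div_le_div_of_nonneg_right (c := (m:ℝ)) (emp_sum_mono ω m h) (by positivity)

lemma emp_add_compl (ω : ℕ → List A) {m : ℕ} (hm : 1 ≤ m) (X : Set (List A)) :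
    emp ω m X + emp ω m Xᶜ = 1 := by
  unfold emp
  rw [← add_div, ← Finset.sum_add_distrib]
  have : ∀ i, X.indicator (fun _ => (1:ℝ)) (ω i) + Xᶜ.indicator (fun _ => (1:ℝ)) (ω i) = 1 := by
    intro i
    by_cases h : ω i ∈ X
    · rw [Set.indicator_of_mem h, Set.indicator_of_notMem (by simpa using h)]; norm_num
    · rw [Set.indicator_of_notMem h, Set.indicator_of_mem (by simpa using h)]; norm_num
  simp_rw [this]
  rw [Finset.sum_const, Finset.card_range, nsmul_eq_mul, mul_one]
  field_simp

lemma emp_le_one (ω : ℕ → List A) (m : ℕ) (X : Set (List A)) : emp ω m X ≤ 1 := by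
  rcases Nat.eq_zero_or_pos m with rfl | hm
  · unfold emp; simp
  · have := emp_add_compl ω hm X
    have := emp_nonneg ω m Xᶜ
    linarith

lemma emp_diff (ω : ℕ → List A) (m : ℕ) {X Y : Set (List A)} (h : Y ⊆ X) :
    emp ω m (X \ Y) = emp ω m X - emp ω m Y := by
  unfold emp
  rw [div_sub_div_same, ← Finset.sum_sub_distrib]
  congr 1
  refine Finset.sum_congr rfl fun i _ => ?_
  by_cases hy : ω i ∈ Y
  · rw [Set.indicator_of_mem hy, Set.indicator_of_mem (h hy),
      Set.indicator_of_notMem (by simp [hy] : ω i ∉ X \ Y)]; ring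
  · by_cases hx : ω i ∈ X
    · rw [Set.indicator_of_mem hx, Set.indicator_of_notMem hy,
        Set.indicator_of_mem (by simp [hx, hy] : ω i ∈ X \ Y)]; ring
    · rw [Set.indicator_of_notMem hx, Set.indicator_of_notMem hy,
        Set.indicator_of_notMem (by simp [hx] : ω i ∉ X \ Y)]; ring

end emplem

section tail
variable {A : Type*} {P : List A → ℝ} (h0 : ∀ w, 0 ≤ P w) (h1 : HasSum P 1)
include h0 h1

lemma qm_ofReal (Y : Set (List A)) :
    ∑' (w : Y), ENNReal.ofReal (P (w : List A)) = ENNReal.ofReal (qm P Y) := by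
  have hsub : Summable (fun w : Y => P (w : List A)) :=
    h1.summable.subtype Y
  rw [← ENNReal.ofReal_tsum_of_nonneg (fun w : Y => h0 _) hsub]
  congr 1
  rw [qm, ← tsum_subtype]

lemma atom_measure {μ : MeasureTheory.Measure (ℕ → List A)} (hμ : IsIIDProduct P μ)
    (X : Set (List A)) (k : ℕ) (F : Finset ℕ) (hF : F ⊆ Finset.range k) :
    μ {ω | ∀ i ∈ Finset.range k, ω i ∈ (if i ∈ F then X else Xᶜ)}
      = ENNReal.ofReal ((qm P X) ^ F.card * (qm P Xᶜ) ^ (k - F.card)) := by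
  classical
  rw [hμ (Finset.range k) (fun i => if i ∈ F then X else Xᶜ)]
  have : ∀ i ∈ Finset.range k,
      (∑' (w : ((if i ∈ F then X else Xᶜ) : Set (List A))), ENNReal.ofReal (P (w : List A)))
        = ENNReal.ofReal (if i ∈ F then qm P X else qm P Xᶜ) := by
    intro i _
    by_cases h : i ∈ F
    · have hc := congrArg (fun S : Set (List A) => ∑' (w : S), ENNReal.ofReal (P (w : List A)))
        ((if_pos h : (if i ∈ F then X else Xᶜ) = X))
      rw [hc, if_pos h]
      exact qm_ofReal h0 h1 X
    · have hc := congrArg (fun S : Set (List A) => ∑' (w : S), ENNReal.ofReal (P (w : List A)))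
        ((if_neg h : (if i ∈ F then X else Xᶜ) = Xᶜ))
      rw [hc, if_neg h]
      exact qm_ofReal h0 h1 Xᶜ
  rw [Finset.prod_congr rfl this]
  rw [← Finset.prod_sdiff hF]
  have e1 : ∏ i ∈ F, ENNReal.ofReal (if i ∈ F then qm P X else qm P Xᶜ)
      = ENNReal.ofReal (qm P X) ^ F.card := by
    rw [Finset.prod_congr rfl (fun i hi => by rw [if_pos hi]), Finset.prod_const]
  have e2 : ∏ i ∈ Finset.range k \ F, ENNReal.ofReal (if i ∈ F then qm P X else qm P Xᶜ)
      = ENNReal.ofReal (qm P Xᶜ) ^ (k - F.card) := by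
    rw [Finset.prod_congr rfl (fun i hi => by
        rw [if_neg (Finset.mem_sdiff.mp hi).2]), Finset.prod_const,
      Finset.card_sdiff_of_subset hF, Finset.card_range]
  rw [e1, e2, ← ENNReal.ofReal_pow (qm_nonneg h0 h1 X), ← ENNReal.ofReal_pow (qm_nonneg h0 h1 Xᶜ)]
  rw [← ENNReal.ofReal_mul (pow_nonneg (qm_nonneg h0 h1 Xᶜ) _)]
  congr 1
  ring

lemma tail_upper {μ : MeasureTheory.Measure (ℕ → List A)} (hμ : IsIIDProduct P μ)
    (X : Set (List A)) (k : ℕ) {t : ℝ} (ht : 0 < t) (ht1 : t ≤ 1) :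
    μ {ω | qm P X + t ≤ emp ω k X}
      ≤ ENNReal.ofReal (Real.exp (-((k : ℝ) * t ^ 2) / 4)) := by
  classical
  set q := qm P X with hq
  have hq0 : 0 ≤ q := qm_nonneg h0 h1 X
  have hq1 : q ≤ 1 := qm_le_one h0 h1 X
  rcases Nat.eq_zero_or_pos k with rfl | hk
  · have : {ω : ℕ → List A | q + t ≤ emp ω 0 X} = ∅ := by
      ext ω
      simp only [Set.mem_setOf_eq, Set.mem_empty_iff_false, iff_false, not_le]
      unfold emp
      simp
      linarith
    rw [this]
    simp
  -- cover by atoms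
  set 𝒜 : Finset (Finset ℕ) := (Finset.range k).powerset.filter
    (fun F => (k : ℝ) * (q + t) ≤ (F.card : ℝ)) with h𝒜
  have hcover : {ω | q + t ≤ emp ω k X}
      ⊆ ⋃ F ∈ 𝒜, {ω | ∀ i ∈ Finset.range k, ω i ∈ (if i ∈ F then X else Xᶜ)} := by
    intro ω hω
    set F := (Finset.range k).filter (fun i => ω i ∈ X) with hF
    have hFsub : F ⊆ Finset.range k := Finset.filter_subset _ _
    have hcard : (k : ℝ) * (q + t) ≤ (F.card : ℝ) := by
      have hemp := emp_eq_card ω k X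
      simp only [Set.mem_setOf_eq] at hω
      rw [hemp] at hω
      rw [le_div_iff₀ (by positivity : (0:ℝ) < (k:ℝ))] at hω
      calc (k:ℝ) * (q + t) = (q + t) * k := by ring
        _ ≤ _ := hω
    have hFA : F ∈ 𝒜 := by
      rw [h𝒜, Finset.mem_filter]
      exact ⟨Finset.mem_powerset.mpr hFsub, hcard⟩
    refine Set.mem_biUnion hFA ?_
    intro i hi
    by_cases h : i ∈ F
    · rw [if_pos h]
      exact (Finset.mem_filter.mp h).2
    · rw [if_neg h]
      intro hmem
      exact h (Finset.mem_filter.mpr ⟨hi, hmem⟩)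
  calc μ {ω | q + t ≤ emp ω k X}
      ≤ μ (⋃ F ∈ 𝒜, {ω | ∀ i ∈ Finset.range k, ω i ∈ (if i ∈ F then X else Xᶜ)}) :=
        MeasureTheory.measure_mono hcover
    _ ≤ ∑ F ∈ 𝒜, μ {ω | ∀ i ∈ Finset.range k, ω i ∈ (if i ∈ F then X else Xᶜ)} :=
        MeasureTheory.measure_biUnion_finset_le _ _
    _ = ∑ F ∈ 𝒜, ENNReal.ofReal (q ^ F.card * (qm P Xᶜ) ^ (k - F.card)) := by
        refine Finset.sum_congr rfl fun F hF => ?_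
        have hFsub : F ⊆ Finset.range k := by
          rw [h𝒜, Finset.mem_filter, Finset.mem_powerset] at hF
          exact hF.1
        exact atom_measure h0 h1 hμ X k F hFsub
    _ = ENNReal.ofReal (∑ F ∈ 𝒜, q ^ F.card * (qm P Xᶜ) ^ (k - F.card)) := by
        rw [ENNReal.ofReal_sum_of_nonneg]
        intro F _
        exact mul_nonneg (pow_nonneg hq0 _) (pow_nonneg (qm_nonneg h0 h1 Xᶜ) _)
    _ ≤ ENNReal.ofReal (Real.exp (-((k : ℝ) * t ^ 2) / 4)) := by
        apply ENNReal.ofReal_le_ofReal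
        have hcompl : qm P Xᶜ = 1 - q := by
          have := qm_add_compl h0 h1 X; linarith
        rw [hcompl]
        exact binom_tail k q t hq0 hq1 ht ht1

lemma tail_lower {μ : MeasureTheory.Measure (ℕ → List A)} (hμ : IsIIDProduct P μ)
    (X : Set (List A)) {k : ℕ} (hk : 1 ≤ k) {t : ℝ} (ht : 0 < t) (ht1 : t ≤ 1) :
    μ {ω | emp ω k X ≤ qm P X - t}
      ≤ ENNReal.ofReal (Real.exp (-((k : ℝ) * t ^ 2) / 4)) := by
  have hsub : {ω : ℕ → List A | emp ω k X ≤ qm P X - t}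
      ⊆ {ω | qm P Xᶜ + t ≤ emp ω k Xᶜ} := by
    intro ω hω
    have h1' := emp_add_compl ω hk X
    have h2' := qm_add_compl h0 h1 X
    simp only [Set.mem_setOf_eq] at hω ⊢
    linarith
  exact (MeasureTheory.measure_mono hsub).trans (tail_upper h0 h1 hμ Xᶜ k ht ht1)

lemma tail_two_sided {μ : MeasureTheory.Measure (ℕ → List A)} (hμ : IsIIDProduct P μ)
    (X : Set (List A)) {k : ℕ} (hk : 1 ≤ k) {t : ℝ} (ht : 0 < t) (ht1 : t ≤ 1) :
    μ {ω | t ≤ |emp ω k X - qm P X|}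
      ≤ 2 * ENNReal.ofReal (Real.exp (-((k : ℝ) * t ^ 2) / 4)) := by
  have hsub : {ω : ℕ → List A | t ≤ |emp ω k X - qm P X|}
      ⊆ {ω | qm P X + t ≤ emp ω k X} ∪ {ω | emp ω k X ≤ qm P X - t} := by
    intro ω hω
    simp only [Set.mem_setOf_eq, Set.mem_union] at hω ⊢
    rcases le_abs.mp hω with h | h
    · left; linarith
    · right; linarith
  refine (MeasureTheory.measure_mono hsub).trans ?_
  refine (MeasureTheory.measure_union_le _ _).trans ?_
  have hu := tail_upper h0 h1 hμ X k ht ht1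
  have hl := tail_lower h0 h1 hμ X hk ht ht1
  rw [two_mul]
  exact add_le_add hu hl

end tail
section summaux

lemma single_pow_le_exp {x : ℝ} (hx : 0 ≤ x) : x ^ 9 / (362880 : ℝ) ≤ Real.exp x := by
  have h := Real.sum_le_exp_of_nonneg hx 10
  have h9 : x ^ 9 / ((Nat.factorial 9 : ℕ) : ℝ)
      ≤ ∑ i ∈ Finset.range 10, x ^ i / (Nat.factorial i : ℝ) := by
    refine Finset.single_le_sum (f := fun i => x ^ i / (Nat.factorial i : ℝ)) ?_ (by norm_num)
    intro i _
    positivity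
  have he : ((Nat.factorial 9 : ℕ) : ℝ) = 362880 := by norm_num [Nat.factorial]
  rw [he] at h9
  linarith

lemma aux_summable {A B a : ℝ} (hA : 0 ≤ A) (hB : 0 ≤ B) (ha : 0 < a) :
    Summable (fun k : ℕ => (A * (k:ℝ) ^ ((1:ℝ)/3) + B) * Real.exp (-(a * (k:ℝ) ^ ((1:ℝ)/3)))) := by
  set C : ℝ := (A + B) * 362880 / a ^ 9 with hC
  have hC0 : 0 ≤ C := by positivity
  have key : ∀ k : ℕ, 1 ≤ k →
      (A * (k:ℝ) ^ ((1:ℝ)/3) + B) * Real.exp (-(a * (k:ℝ) ^ ((1:ℝ)/3)))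
        ≤ C * (1 / (k:ℝ) ^ 2) := by
    intro k hk
    set y : ℝ := (k:ℝ) ^ ((1:ℝ)/3) with hy
    have hkpos : (0:ℝ) < (k:ℝ) := by exact_mod_cast hk
    have hy0 : 0 < y := Real.rpow_pos_of_pos hkpos _
    have hy3 : y ^ (3:ℕ) = (k:ℝ) := by
      rw [hy, ← Real.rpow_natCast ((k:ℝ) ^ ((1:ℝ)/3)) 3, ← Real.rpow_mul (le_of_lt hkpos)]
      norm_num
    have hk1 : (1:ℝ) ≤ (k:ℝ) := by exact_mod_cast hk
    have hy1 : 1 ≤ y := by nlinarith [sq_nonneg (y - 1), sq_nonneg (y + 1), sq_nonneg y]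
    have hz9 : (a * y) ^ 9 * Real.exp (-(a * y)) ≤ 362880 := by
      have h1 := single_pow_le_exp (mul_nonneg (le_of_lt ha) (le_of_lt hy0))
      have h4 := mul_le_mul_of_nonneg_right h1 (le_of_lt (Real.exp_pos (-(a*y))))
      have hprod : Real.exp (a*y) * Real.exp (-(a*y)) = 1 := by
        rw [← Real.exp_add]; simp
      rw [hprod] at h4
      nlinarith [h4]
    have hexp : Real.exp (-(a * y)) ≤ 362880 / (a * y) ^ 9 := by
      rw [le_div_iff₀ (by positivity)]
      linarith [hz9]
    have hstep1 : A * y + B ≤ (A + B) * y := by nlinarith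
    have hy8 : (k:ℝ) ^ 2 ≤ y ^ 8 := by
      have h8 : y ^ 8 = ((k:ℝ)) ^ 2 * y ^ 2 := by
        rw [← hy3]; ring
      have hy2 : 1 ≤ y ^ 2 := by nlinarith
      nlinarith [sq_nonneg ((k:ℝ))]
    calc (A * y + B) * Real.exp (-(a * y))
        ≤ ((A + B) * y) * (362880 / (a * y) ^ 9) := by
          refine mul_le_mul hstep1 hexp (Real.exp_nonneg _) ?_
          positivity
      _ = C / y ^ 8 := by
          rw [hC]; field_simp
      _ ≤ C / (k:ℝ) ^ 2 := by
          apply div_le_div_of_nonneg_left hC0 (by positivity) hy8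
      _ = C * (1 / (k:ℝ) ^ 2) := by ring
  have hnn : ∀ k : ℕ, 0 ≤ (A * (k:ℝ) ^ ((1:ℝ)/3) + B) * Real.exp (-(a * (k:ℝ) ^ ((1:ℝ)/3))) := by
    intro k
    have : (0:ℝ) ≤ (k:ℝ) ^ ((1:ℝ)/3) := Real.rpow_nonneg (Nat.cast_nonneg k) _
    have : (0:ℝ) ≤ A * (k:ℝ) ^ ((1:ℝ)/3) + B := by nlinarith
    exact mul_nonneg this (Real.exp_nonneg _)
  have hsum2 : Summable (fun k : ℕ => C * (1 / ((k:ℝ)) ^ 2)) :=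
    (Real.summable_one_div_nat_pow.mpr one_lt_two).mul_left C
  refine (summable_nat_add_iff 1).mp ?_
  refine Summable.of_nonneg_of_le (fun k => hnn (k + 1)) (fun k => key (k+1) (by omega)) ?_
  exact (summable_nat_add_iff 1).mpr hsum2

end summaux

section residual
variable {A : Type*} {P : List A → ℝ} (h0 : ∀ w, 0 ≤ P w) (h1 : HasSum P 1)
include h0 h1

lemma summable_append (v : List A) : Summable (fun w : List A => P (v ++ w)) :=
  h1.summable.comp_injective (List.append_right_injective v)

lemma qm_pre_append (v : List A) : qm P (pre v) = ∑' w, P (v ++ w) := by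
  have he : ∀ w : List A, v <+: v ++ w := fun w => ⟨w, rfl⟩
  let e : List A ≃ pre v :=
    { toFun := fun w => ⟨v ++ w, he w⟩
      invFun := fun x => (x : List A).drop v.length
      left_inv := fun w => by simp
      right_inv := fun x => by
        obtain ⟨z, hz⟩ := x.2
        apply Subtype.ext
        simp only
        rw [← hz, List.drop_left]
      }
  have := Equiv.tsum_eq e (fun x : pre v => P (x : List A))
  rw [qm, ← tsum_subtype]
  rw [← this]
  rfl

lemma res_sum (u' w : List A) :
    ∑' w', residualLang P u' (w ++ w') = qm P (pre (u' ++ w)) / qm P (pre u') := by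
  unfold residualLang
  have hZ : (∑' v : pre u', P (v : List A)) = qm P (pre u') := by
    rw [qm, ← tsum_subtype]
  simp_rw [hZ]
  rw [tsum_div_const]
  congr 1
  rw [qm_pre_append h0 h1]
  refine tsum_congr fun w' => ?_
  rw [List.append_assoc]

end residual
section truecomb
variable {A : Type*} {P : List A → ℝ} (h0 : ∀ w, 0 ≤ P w) (h1 : HasSum P 1)
include h0 h1

lemma true_comb {n : ℕ} (u : Fin (n + 1) → List A) (α : Fin n → ℝ)
    (hcomb : ∀ w, residualLang P (u 0) w = ∑ i : Fin n, α i * residualLang P (u i.succ) w)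
    (w : List A) :
    qm P (pre (u 0 ++ w)) / qm P (pre (u 0))
      = ∑ i : Fin n, α i * (qm P (pre (u i.succ ++ w)) / qm P (pre (u i.succ))) := by
  have hsummand : ∀ i : Fin n,
      Summable (fun w' => α i * residualLang P (u i.succ) (w ++ w')) := by
    intro i
    unfold residualLang
    have hs : Summable (fun w' => P (u i.succ ++ (w ++ w'))) := by
      have := summable_append h0 h1 (u i.succ ++ w)
      refine this.congr fun w' => ?_
      rw [List.append_assoc]
    exact (hs.div_const _).mul_left _
  have hL := tsum_congr (L := SummationFilter.unconditional _) (fun w' => hcomb (w ++ w'))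
  rw [res_sum h0 h1 (u 0) w] at hL
  rw [hL]
  rw [Summable.tsum_finsetSum (fun i _ => hsummand i)]
  refine Finset.sum_congr rfl fun i _ => ?_
  rw [tsum_mul_left, res_sum h0 h1 (u i.succ) w]

end truecomb

lemma ratio_bound {g q E p δ pm : ℝ} (hq0 : 0 ≤ q) (hqp : q ≤ p) (hppm : pm ≤ p)
    (hpm0 : 0 < pm) (hE : pm / 2 ≤ E) (hgq : |g - q| ≤ δ) (hEp : |E - p| ≤ δ)
    (hδ0 : 0 ≤ δ) : |g / E - q / p| ≤ 4 * δ / pm := by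
  have hE0 : 0 < E := lt_of_lt_of_le (by linarith) hE
  have hp0 : 0 < p := lt_of_lt_of_le hpm0 hppm
  have key : g / E - q / p = (g - q) / E + q * (p - E) / (E * p) := by
    field_simp; ring
  rw [key]
  have h1 : |(g - q) / E| ≤ δ / (pm / 2) := by
    rw [abs_div, abs_of_pos hE0]
    exact div_le_div₀ hδ0 hgq (by linarith) hE
  have h2 : |q * (p - E) / (E * p)| ≤ δ / (pm / 2) := by
    rw [abs_div, abs_of_pos (mul_pos hE0 hp0), abs_mul, abs_of_nonneg hq0]
    have hnum : q * |p - E| ≤ p * δ := by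
      have h' : |p - E| ≤ δ := by rw [abs_sub_comm]; exact hEp
      have := mul_le_mul hqp h' (abs_nonneg _) (le_of_lt hp0)
      linarith
    have hden : (pm / 2) * p ≤ E * p := by
      exact mul_le_mul_of_nonneg_right hE (le_of_lt hp0)
    calc q * |p - E| / (E * p) ≤ p * δ / ((pm / 2) * p) :=
          div_le_div₀ (by positivity) hnum (by positivity) hden
      _ = δ / (pm / 2) := by field_simp
  calc |(g - q) / E + q * (p - E) / (E * p)|
      ≤ |(g - q) / E| + |q * (p - E) / (E * p)| := abs_add_le _ _
    _ ≤ δ / (pm / 2) + δ / (pm / 2) := add_le_add h1 h2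
    _ = 4 * δ / pm := by field_simp; ring
theorem statement14 {A : Type*} [Fintype A] [Nonempty A]
    (P : List A → ℝ) (hP : IsStochastic P) {n : ℕ} (u : Fin (n + 1) → List A)
    (hres : ∀ i, 0 < ∑' v : pre (u i), P (v : List A))
    (α : Fin n → ℝ)
    (hcomb : ∀ w, residualLang P (u 0) w = ∑ i : Fin n, α i * residualLang P (u i.succ) w)
    (μ : Measure (ℕ → List A)) (hμ : IsIIDProduct P μ) :
    ∀ᵐ ω ∂μ, ∃ K : ℕ, ∀ k ≥ K,
      (∀ i, 0 < emp ω k (pre (u i))) ∧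
      ∃ x : Fin n → ℝ,
        IsSolution (fun i : Fin n => u i.succ) (u 0) ω k ((k : ℝ) ^ (-(1 / 3) : ℝ)) x := by
  classical
  obtain ⟨hP0, hP1⟩ := hP
  letI : LinearOrder A := LinearOrder.lift' (fun a => Fintype.equivFin A a) (Equiv.injective _)
  have hpeq : ∀ j, (∑' v : pre (u j), P (v : List A)) = qm P (pre (u j)) := by
    intro j; rw [qm, ← tsum_subtype]
  have hppos : ∀ j, 0 < qm P (pre (u j)) := fun j => by rw [← hpeq j]; exact hres j
  have hne : (Finset.univ : Finset (Fin (n+1))).Nonempty := Finset.univ_nonempty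
  set pm : ℝ := Finset.univ.inf' hne (fun j => qm P (pre (u j))) with hpmdef
  have hpmpos : 0 < pm := (Finset.lt_inf'_iff hne).mpr (fun j _ => hppos j)
  have hpmle : ∀ j, pm ≤ qm P (pre (u j)) := fun j =>
    Finset.inf'_le _ (Finset.mem_univ j)
  have hpm1 : pm ≤ 1 := (hpmle 0).trans (qm_le_one hP0 hP1 _)
  have habs0 : (0:ℝ) ≤ ∑ i, |α i| := Finset.sum_nonneg fun i _ => abs_nonneg _
  set S : ℝ := 1 + ∑ i, |α i| with hSdef
  have hS1 : 1 ≤ S := by rw [hSdef]; linarith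
  have hS0 : 0 < S := by linarith
  set c : ℝ := pm / (24 * S) with hcdef
  have hc0 : 0 < c := by rw [hcdef]; positivity
  have hc1 : c ≤ 1 := by
    rw [hcdef, div_le_one (by positivity)]
    nlinarith
  set t : ℕ → ℝ := fun k => c * (k:ℝ) ^ (-(1/3) : ℝ) with htdef
  have htpos : ∀ k : ℕ, 1 ≤ k → 0 < t k := by
    intro k hk
    have hk' : (0:ℝ) < (k:ℝ) := by exact_mod_cast hk
    exact mul_pos hc0 (Real.rpow_pos_of_pos hk' _)
  have htc : ∀ k : ℕ, 1 ≤ k → t k ≤ c := by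
    intro k hk
    have hk1 : (1:ℝ) ≤ (k:ℝ) := by exact_mod_cast hk
    have h' := Real.rpow_le_one_of_one_le_of_nonpos hk1 (by norm_num : (-(1/3):ℝ) ≤ 0)
    calc t k = c * (k:ℝ) ^ (-(1/3) : ℝ) := rfl
      _ ≤ c * 1 := mul_le_mul_of_nonneg_left h' (le_of_lt hc0)
      _ = c := mul_one c
  have htle1 : ∀ k : ℕ, 1 ≤ k → t k ≤ 1 := fun k hk => (htc k hk).trans hc1
  set M : ℕ → ℕ := fun k => ⌊1 / t k⌋₊ with hMdef
  set BAD : ℕ → Set (ℕ → List A) := fun k =>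
    if k = 0 then ∅ else
      ⋃ j ∈ Finset.Icc 1 (M k),
        ({ω | t k ≤ |emp ω k (Tset P (t k) j) - qm P (Tset P (t k) j)|} ∪
         {ω | t k ≤ |emp ω k ((Tset' P (t k) j)ᶜ) - qm P ((Tset' P (t k) j)ᶜ)|}) with hBADdef
  -- rpow bookkeeping
  have hy3 : ∀ k : ℕ, 1 ≤ k → ((k:ℝ) ^ ((1:ℝ)/3)) ^ (3:ℕ) = (k:ℝ) := by
    intro k hk
    have hk' : (0:ℝ) < (k:ℝ) := by exact_mod_cast hk
    rw [← Real.rpow_natCast ((k:ℝ) ^ ((1:ℝ)/3)) 3, ← Real.rpow_mul (le_of_lt hk')]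
    norm_num
  have hyneg : ∀ k : ℕ, 1 ≤ k → (k:ℝ) ^ (-(1/3) : ℝ) = ((k:ℝ) ^ ((1:ℝ)/3))⁻¹ := by
    intro k hk
    have hk' : (0:ℝ) ≤ (k:ℝ) := Nat.cast_nonneg k
    rw [← Real.rpow_neg hk']
  have hkt2 : ∀ k : ℕ, 1 ≤ k → (k:ℝ) * (t k)^2 = c^2 * (k:ℝ) ^ ((1:ℝ)/3) := by
    intro k hk
    have hk' : (0:ℝ) < (k:ℝ) := by exact_mod_cast hk
    have hy0 : 0 < (k:ℝ) ^ ((1:ℝ)/3) := Real.rpow_pos_of_pos hk' _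
    have h3 := hy3 k hk
    rw [htdef]
    simp only
    rw [hyneg k hk]
    field_simp
    nlinarith [h3]
  have hMle : ∀ k : ℕ, 1 ≤ k → (M k : ℝ) ≤ (k:ℝ) ^ ((1:ℝ)/3) / c := by
    intro k hk
    have h1' : (M k : ℝ) ≤ 1 / t k := Nat.floor_le (by positivity : (0:ℝ) ≤ 1 / t k)
    have hy0 : 0 < (k:ℝ) ^ ((1:ℝ)/3) :=
      Real.rpow_pos_of_pos (by exact_mod_cast hk) _
    have h2' : 1 / t k = (k:ℝ) ^ ((1:ℝ)/3) / c := by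
      rw [htdef]
      simp only
      rw [hyneg k hk]
      field_simp
    rw [h2'] at h1'
    exact h1'
  -- measure bound for BAD k
  have hBADle : ∀ k : ℕ, μ (BAD k)
      ≤ ENNReal.ofReal ((4 / c * (k:ℝ) ^ ((1:ℝ)/3) + 4)
          * Real.exp (-(c ^ 2 / 4 * (k:ℝ) ^ ((1:ℝ)/3)))) := by
    intro k
    have hynn : (0:ℝ) ≤ (k:ℝ) ^ ((1:ℝ)/3) := Real.rpow_nonneg (Nat.cast_nonneg k) _
    rcases Nat.eq_zero_or_pos k with rfl | hk
    · have hB0 : BAD 0 = ∅ := by rw [hBADdef]; simp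
      rw [hB0]
      simp
    · have hBeq : BAD k = ⋃ j ∈ Finset.Icc 1 (M k),
        ({ω | t k ≤ |emp ω k (Tset P (t k) j) - qm P (Tset P (t k) j)|} ∪
         {ω | t k ≤ |emp ω k ((Tset' P (t k) j)ᶜ) - qm P ((Tset' P (t k) j)ᶜ)|}) := by
        rw [hBADdef]
        simp only [if_neg (by omega : ¬ k = 0)]
      have hex : ∀ j : ℕ,
          μ ({ω | t k ≤ |emp ω k (Tset P (t k) j) - qm P (Tset P (t k) j)|} ∪
             {ω | t k ≤ |emp ω k ((Tset' P (t k) j)ᶜ) - qm P ((Tset' P (t k) j)ᶜ)|})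
          ≤ ENNReal.ofReal (4 * Real.exp (-((k:ℝ) * (t k)^2)/4)) := by
        intro j
        refine (MeasureTheory.measure_union_le _ _).trans ?_
        have b1 := tail_two_sided hP0 hP1 hμ (Tset P (t k) j) hk (htpos k hk) (htle1 k hk)
        have b2 := tail_two_sided hP0 hP1 hμ ((Tset' P (t k) j)ᶜ) hk (htpos k hk) (htle1 k hk)
        refine (add_le_add b1 b2).trans (le_of_eq ?_)
        rw [ENNReal.ofReal_mul (by norm_num : (0:ℝ) ≤ 4)]
        have h4 : ENNReal.ofReal (4:ℝ) = 4 := by norm_num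
        rw [h4]
        ring
      rw [hBeq]
      calc μ (⋃ j ∈ Finset.Icc 1 (M k),
            ({ω | t k ≤ |emp ω k (Tset P (t k) j) - qm P (Tset P (t k) j)|} ∪
             {ω | t k ≤ |emp ω k ((Tset' P (t k) j)ᶜ) - qm P ((Tset' P (t k) j)ᶜ)|}))
          ≤ ∑ j ∈ Finset.Icc 1 (M k),
            μ ({ω | t k ≤ |emp ω k (Tset P (t k) j) - qm P (Tset P (t k) j)|} ∪
             {ω | t k ≤ |emp ω k ((Tset' P (t k) j)ᶜ) - qm P ((Tset' P (t k) j)ᶜ)|}) :=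
            MeasureTheory.measure_biUnion_finset_le _ _
        _ ≤ ∑ j ∈ Finset.Icc 1 (M k),
              ENNReal.ofReal (4 * Real.exp (-((k:ℝ) * (t k)^2)/4)) :=
            Finset.sum_le_sum (fun j _ => hex j)
        _ = (M k : ENNReal) * ENNReal.ofReal (4 * Real.exp (-((k:ℝ) * (t k)^2)/4)) := by
            rw [Finset.sum_const, Nat.card_Icc]
            simp [nsmul_eq_mul]
        _ = ENNReal.ofReal ((M k : ℝ) * (4 * Real.exp (-((k:ℝ) * (t k)^2)/4))) := by
            rw [ENNReal.ofReal_mul (Nat.cast_nonneg (M k)), ENNReal.ofReal_natCast]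
        _ ≤ ENNReal.ofReal ((4 / c * (k:ℝ) ^ ((1:ℝ)/3) + 4)
              * Real.exp (-(c ^ 2 / 4 * (k:ℝ) ^ ((1:ℝ)/3)))) := by
            apply ENNReal.ofReal_le_ofReal
            have he : -((k:ℝ) * (t k)^2)/4 = -(c ^ 2 / 4 * (k:ℝ) ^ ((1:ℝ)/3)) := by
              rw [hkt2 k hk]; ring
            rw [he]
            have hM := hMle k hk
            have hexp0 : 0 ≤ Real.exp (-(c ^ 2 / 4 * (k:ℝ) ^ ((1:ℝ)/3))) := Real.exp_nonneg _
            have : (M k : ℝ) * 4 ≤ 4 / c * (k:ℝ) ^ ((1:ℝ)/3) + 4 := by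
              have : (M k : ℝ) * 4 ≤ ((k:ℝ) ^ ((1:ℝ)/3) / c) * 4 := by nlinarith
              calc (M k : ℝ) * 4 ≤ ((k:ℝ) ^ ((1:ℝ)/3) / c) * 4 := this
                _ = 4 / c * (k:ℝ) ^ ((1:ℝ)/3) := by ring
                _ ≤ 4 / c * (k:ℝ) ^ ((1:ℝ)/3) + 4 := by linarith
            nlinarith [hexp0, this]
  -- summability
  have hsumfin : ∑' k, μ (BAD k) ≠ ⊤ := by
    have hs := aux_summable (A := 4 / c) (B := 4) (a := c ^ 2 / 4)
      (by positivity) (by norm_num) (by positivity)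
    have hnn : ∀ k : ℕ, 0 ≤ (4 / c * (k:ℝ) ^ ((1:ℝ)/3) + 4)
        * Real.exp (-(c ^ 2 / 4 * (k:ℝ) ^ ((1:ℝ)/3))) := by
      intro k
      have hynn : (0:ℝ) ≤ (k:ℝ) ^ ((1:ℝ)/3) := Real.rpow_nonneg (Nat.cast_nonneg k) _
      have h4c : (0:ℝ) ≤ 4 / c := by positivity
      refine mul_nonneg (by nlinarith) (Real.exp_nonneg _)
    refine ne_top_of_le_ne_top (b := ENNReal.ofReal
      (∑' k : ℕ, (4 / c * (k:ℝ) ^ ((1:ℝ)/3) + 4)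
        * Real.exp (-(c ^ 2 / 4 * (k:ℝ) ^ ((1:ℝ)/3))))) ENNReal.ofReal_ne_top ?_
    calc ∑' k, μ (BAD k)
        ≤ ∑' k : ℕ, ENNReal.ofReal ((4 / c * (k:ℝ) ^ ((1:ℝ)/3) + 4)
            * Real.exp (-(c ^ 2 / 4 * (k:ℝ) ^ ((1:ℝ)/3)))) := ENNReal.tsum_le_tsum hBADle
      _ = ENNReal.ofReal (∑' k : ℕ, (4 / c * (k:ℝ) ^ ((1:ℝ)/3) + 4)
            * Real.exp (-(c ^ 2 / 4 * (k:ℝ) ^ ((1:ℝ)/3)))) :=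
          (ENNReal.ofReal_tsum_of_nonneg hnn hs).symm
  -- Borel–Cantelli
  have hae := MeasureTheory.ae_eventually_notMem hsumfin
  filter_upwards [hae] with ω hω
  obtain ⟨K₀, hK₀⟩ := Filter.eventually_atTop.mp hω
  refine ⟨max K₀ 1, fun k hk => ?_⟩
  have hk1 : 1 ≤ k := le_trans (le_max_right _ _) hk
  have hnot := hK₀ k (le_trans (le_max_left _ _) hk)
  rw [hBADdef] at hnot
  simp only [if_neg (by omega : ¬ k = 0)] at hnot
  simp only [Set.mem_iUnion, Set.mem_union, Set.mem_setOf_eq, not_exists, not_or,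
    not_le] at hnot
  -- uniform bound on prefix sets
  have huni : ∀ v : List A, |emp ω k (pre v) - qm P (pre v)| ≤ 6 * t k := by
    intro v
    refine uniform_pre hP0 hP1 (emp ω k) (emp_nonneg ω k) (emp_le_one ω k)
      (fun X Y h => emp_mono ω k h) (fun X Y h => emp_diff ω k h) (htpos k hk1)
      ?_ ?_ v
    · intro j hj hjt _
      have hjM : j ∈ Finset.Icc 1 (M k) := by
        rw [Finset.mem_Icc]
        refine ⟨hj, Nat.le_floor ?_⟩
        rw [le_div_iff₀ (htpos k hk1)]
        exact hjt
      exact le_of_lt ((hnot j hjM).1)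
    · intro j hj hjt _
      have hjM : j ∈ Finset.Icc 1 (M k) := by
        rw [Finset.mem_Icc]
        refine ⟨hj, Nat.le_floor ?_⟩
        rw [le_div_iff₀ (htpos k hk1)]
        exact hjt
      exact le_of_lt ((hnot j hjM).2)
  have hδ0 : 0 ≤ 6 * t k := by nlinarith [htpos k hk1]
  have hδle : 6 * t k ≤ pm / (4 * S) := by
    have := htc k hk1
    have hc6 : 6 * c = pm / (4 * S) := by
      rw [hcdef]; field_simp; ring
    nlinarith
  have hδpm2 : 6 * t k ≤ pm / 2 := by
    have h2 : pm / (4 * S) ≤ pm / 2 := by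
      apply div_le_div_of_nonneg_left (le_of_lt hpmpos) (by norm_num) (by nlinarith)
    linarith
  have hE : ∀ j, pm / 2 ≤ emp ω k (pre (u j)) := by
    intro j
    have h' := abs_le.mp (huni (u j))
    have := hpmle j
    linarith [h'.1]
  constructor
  · intro i
    exact lt_of_lt_of_le (by linarith : (0:ℝ) < pm / 2) (hE i)
  · refine ⟨α, ?_, ?_⟩
    · have h := true_comb hP0 hP1 u α hcomb []
      simp only [List.append_nil] at h
      rw [div_self (ne_of_gt (hppos 0))] at h
      have h2 : ∀ i : Fin n,
          α i * (qm P (pre (u i.succ)) / qm P (pre (u i.succ))) = α i := by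
        intro i; rw [div_self (ne_of_gt (hppos i.succ)), mul_one]
      rw [Finset.sum_congr rfl (fun i _ => h2 i)] at h
      exact h.symm
    · intro w _
      have hid := true_comb hP0 hP1 u α hcomb w
      have hbound : ∀ j : Fin (n+1),
          |emp ω k (pre (u j ++ w)) / emp ω k (pre (u j))
            - qm P (pre (u j ++ w)) / qm P (pre (u j))| ≤ 4 * (6 * t k) / pm := by
        intro j
        refine ratio_bound (qm_nonneg hP0 hP1 _) ?_ (hpmle j) hpmpos (hE j)
          (huni _) (huni (u j)) hδ0
        exact qm_mono hP0 hP1 (fun x hx => (List.prefix_append (u j) w).trans hx)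
      set D : Fin (n+1) → ℝ := fun j =>
        emp ω k (pre (u j ++ w)) / emp ω k (pre (u j))
          - qm P (pre (u j ++ w)) / qm P (pre (u j)) with hD
      have hboundD : ∀ j : Fin (n+1), |D j| ≤ 4 * (6 * t k) / pm := by
        intro j
        exact hbound j
      have key : emp ω k (pre (u 0 ++ w)) / emp ω k (pre (u 0))
            - ∑ i : Fin n, α i * (emp ω k (pre (u i.succ ++ w)) / emp ω k (pre (u i.succ)))
          = D 0 - ∑ i : Fin n, α i * D i.succ := by
        simp only [hD]
        rw [hid]
        simp only [mul_sub, Finset.sum_sub_distrib]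
        ring
      show |emp ω k (pre (u 0 ++ w)) / emp ω k (pre (u 0))
          - ∑ i : Fin n, α i * (emp ω k (pre (u i.succ ++ w)) / emp ω k (pre (u i.succ)))|
          ≤ (k:ℝ) ^ (-(1/3) : ℝ)
      rw [key]
      have hpm' : pm ≠ 0 := ne_of_gt hpmpos
      have hS' : S ≠ 0 := ne_of_gt hS0
      calc |D 0 - ∑ i : Fin n, α i * D i.succ|
          ≤ |D 0| + |∑ i : Fin n, α i * D i.succ| := abs_sub _ _
        _ ≤ 4 * (6 * t k) / pm + ∑ i : Fin n, |α i| * (4 * (6 * t k) / pm) := by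
            refine add_le_add (hboundD 0) ?_
            refine (Finset.abs_sum_le_sum_abs _ _).trans ?_
            refine Finset.sum_le_sum fun i _ => ?_
            rw [abs_mul]
            exact mul_le_mul_of_nonneg_left (hboundD i.succ) (abs_nonneg _)
        _ = S * (4 * (6 * t k) / pm) := by
            rw [hSdef, ← Finset.sum_mul]
            ring
        _ = (k:ℝ) ^ (-(1/3) : ℝ) := by
            have ht' : t k = c * (k:ℝ) ^ (-(1/3) : ℝ) := rfl
            rw [ht', hcdef]
            field_simp
            ring
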